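/- In the category of frames, pushouts preserve onto frame homomorphisms: if f : A → B is a surjective frame homomorphism and g : A → C is any frame homomorphism, then the pushout of f along g is a surjective frame homomorphism. -/

import Mathlib

open Order

/-- `f' : C → P` and `g' : B → P` form a pushout square over `f : A → B` and `g : A → C`
in the category of frames: `f'` is the pushout of `f` along `g`. -/
def IsPushoutSquare {A B C P : Type} [Order.Frame A] [Order.Frame B] [Order.Frame C]
    [Order.Frame P] (f : FrameHom A B) (g : FrameHom A C)
    (f' : FrameHom C P) (g' : FrameHom B P) : Prop :=
  g'.comp f = f'.comp g ∧
    ∀ (Q : Type) [Order.Frame Q] (u : FrameHom B Q) (v : FrameHom C Q),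
      u.comp f = v.comp g → ∃! k : FrameHom P Q, k.comp g' = u ∧ k.comp f' = v

section RangeFrame

variable {C P : Type} [Order.Frame C] [Order.Frame P] (f' : FrameHom C P)

/-- The range of a frame hom, as a type. -/
def RangeSub : Type := {p : P // p ∈ Set.range f'}

namespace RangeSub

instance : PartialOrder (RangeSub f') := Subtype.partialOrder _

lemma sSup_mem (S : Set P) (hS : S ⊆ Set.range f') : sSup S ∈ Set.range f' := by
  refine ⟨sSup (f' ⁻¹' S), ?_⟩
  rw [map_sSup]
  congr 1
  ext p
  simp only [Set.mem_image, Set.mem_preimage]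
  constructor
  · rintro ⟨c, hc, rfl⟩; exact hc
  · intro hp; obtain ⟨c, rfl⟩ := hS hp; exact ⟨c, hp, rfl⟩

instance : SupSet (RangeSub f') :=
  ⟨fun s => ⟨sSup (Subtype.val '' s), sSup_mem f' _ (by rintro p ⟨⟨q, hq⟩, _, rfl⟩; exact hq)⟩⟩

lemma isLUB_sSup (s : Set (RangeSub f')) : IsLUB s (sSup s) := by
  constructor
  · intro x hx
    exact le_sSup (Set.mem_image_of_mem _ hx)
  · intro b hb
    refine sSup_le ?_
    rintro p ⟨x, hx, rfl⟩
    exact hb hx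

instance : CompleteLattice (RangeSub f') where
  inf a b := ⟨a.1 ⊓ b.1, by
    obtain ⟨c, hc⟩ := a.2; obtain ⟨d, hd⟩ := b.2
    exact ⟨c ⊓ d, by rw [map_inf, hc, hd]⟩⟩
  le_inf a b c hab hac := le_inf (α := P) hab hac
  inf_le_left a b := inf_le_left (α := P)
  inf_le_right a b := inf_le_right (α := P)
  top := ⟨⊤, ⊤, map_top f'⟩
  le_top a := le_top (α := P)
  __ := completeLatticeOfSup (RangeSub f') (isLUB_sSup f')

@[simp] lemma coe_inf (a b : RangeSub f') : ((a ⊓ b).1 : P) = a.1 ⊓ b.1 := rfl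
@[simp] lemma coe_top : ((⊤ : RangeSub f').1 : P) = ⊤ := rfl
@[simp] lemma coe_sSup (s : Set (RangeSub f')) : ((sSup s).1 : P) = sSup (Subtype.val '' s) := rfl
@[simp] lemma coe_le_coe (a b : RangeSub f') : a.1 ≤ b.1 ↔ a ≤ b := Iff.rfl

instance : Order.Frame (RangeSub f') := by
  refine Order.Frame.ofMinimalAxioms ⟨fun a s => ?_⟩
  rw [← coe_le_coe, coe_inf, coe_sSup]
  calc a.1 ⊓ sSup (Subtype.val '' s) = ⨆ p ∈ Subtype.val '' s, a.1 ⊓ p := inf_sSup_eq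
    _ ≤ (⨆ b ∈ s, a ⊓ b).1 := by
        refine iSup₂_le ?_
        rintro p ⟨b, hb, rfl⟩
        have h1 : (a ⊓ b).1 ≤ (⨆ b ∈ s, a ⊓ b).1 := by
          rw [coe_le_coe]; exact le_iSup₂ (f := fun b _ => a ⊓ b) b hb
        exact h1

/-- The inclusion of the range into the codomain, as a frame hom. -/
def incl : FrameHom (RangeSub f') P where
  toFun := Subtype.val
  map_inf' _ _ := rfl
  map_top' := rfl
  map_sSup' s := by
    show (sSup s).1 = sSup (Subtype.val '' s)
    rw [coe_sSup]

@[simp] lemma incl_apply (a : RangeSub f') : incl f' a = a.1 := rfl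

/-- The corestriction to the range. -/
def corestrict : FrameHom C (RangeSub f') where
  toFun c := ⟨f' c, c, rfl⟩
  map_inf' a b := Subtype.ext (by simp [map_inf]; rfl)
  map_top' := Subtype.ext (by simp)
  map_sSup' s := Subtype.ext (by
    simp only [map_sSup, coe_sSup]
    rw [sSup_image, ← sSup_image]
    congr 1
    ext p
    simp only [Set.mem_image]
    constructor
    · rintro ⟨c, hc, rfl⟩; exact ⟨_, ⟨c, hc, rfl⟩, rfl⟩
    · rintro ⟨_, ⟨c, hc, rfl⟩, rfl⟩; exact ⟨c, hc, rfl⟩)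

/-- Corestriction of any frame hom landing in the range of `f'`. -/
def corestrict' {B : Type} [Order.Frame B] (h : FrameHom B P)
    (hh : ∀ b, h b ∈ Set.range f') : FrameHom B (RangeSub f') where
  toFun b := ⟨h b, hh b⟩
  map_inf' a b := Subtype.ext (by simp [map_inf]; rfl)
  map_top' := Subtype.ext (by simp)
  map_sSup' s := Subtype.ext (by
    simp only [map_sSup, coe_sSup]
    rw [sSup_image, ← sSup_image]
    congr 1
    ext p
    simp only [Set.mem_image]
    constructor
    · rintro ⟨c, hc, rfl⟩; exact ⟨_, ⟨c, hc, rfl⟩, rfl⟩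
    · rintro ⟨_, ⟨c, hc, rfl⟩, rfl⟩; exact ⟨c, hc, rfl⟩)

@[simp] lemma corestrict'_apply {B : Type} [Order.Frame B] (h : FrameHom B P)
    (hh : ∀ b, h b ∈ Set.range f') (b : B) : (corestrict' f' h hh b).1 = h b := rfl

end RangeSub

end RangeFrame

/-- In the category of frames, pushouts preserve onto frame homomorphisms. -/
theorem pushout_preserves_surjective {A B C P : Type} [Order.Frame A] [Order.Frame B]
    [Order.Frame C] [Order.Frame P] (f : FrameHom A B) (g : FrameHom A C)
    (f' : FrameHom C P) (g' : FrameHom B P)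
    (hpo : IsPushoutSquare f g f' g') (hf : Function.Surjective f) :
    Function.Surjective f' := by
  obtain ⟨hsq, huniv⟩ := hpo
  have hrange : ∀ b, g' b ∈ Set.range f' := by
    intro b
    obtain ⟨a, rfl⟩ := hf b
    exact ⟨g a, (DFunLike.congr_fun hsq a).symm⟩
  set u : FrameHom B (RangeSub f') := RangeSub.corestrict' f' g' hrange with hu
  set v : FrameHom C (RangeSub f') := RangeSub.corestrict' f' f' (fun c => ⟨c, rfl⟩) with hv
  have hcomm : u.comp f = v.comp g := by
    ext a
    exact Subtype.ext (DFunLike.congr_fun hsq a)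
  obtain ⟨k, ⟨hk1, hk2⟩, _⟩ := huniv (RangeSub f') u v hcomm
  obtain ⟨k0, _, hquniq⟩ := huniv P g' f' hsq
  have h1 : ((RangeSub.incl f').comp k).comp g' = g' := by
    rw [FrameHom.comp_assoc, hk1]; ext b; rfl
  have h2 : ((RangeSub.incl f').comp k).comp f' = f' := by
    rw [FrameHom.comp_assoc, hk2]; ext c; rfl
  have hid : (RangeSub.incl f').comp k = FrameHom.id P := by
    rw [hquniq _ ⟨h1, h2⟩, ← hquniq (FrameHom.id P) ⟨by ext; rfl, by ext; rfl⟩]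
  intro p
  obtain ⟨c, hc⟩ := (k p).2
  exact ⟨c, hc.trans (DFunLike.congr_fun hid p)⟩
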